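/- Let (X, d) be a locally compact metric space and let G be a bounded group of lattice isomorphisms of C₀(X), i.e., a group under composition of lattice isomorphisms for which there exists C ≥ 1 with C⁻¹‖x‖_∞ ≤ ‖g x‖_∞ ≤ C‖x‖_∞ for all g ∈ G and x ∈ C₀(X). For g ∈ G let a_g : X → (0,∞) and the homeomorphism φ_g : X → X be the unique pair with g f = a_g · (f ∘ φ_g) for all f. If the family {a_g : g ∈ G} is equicontinuous on every compact subset of X, then the function m : X → ℝ defined by m(t) = inf_{g ∈ G} a_g(t) is continuous (and hence so is m_G = 1/m, which satisfies sup_{g ∈ G} ‖g x‖_∞ = sup_{t ∈ X} m_G(t)·|x(t)| for every x ∈ C₀(X)). -/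

import Mathlib

open ZeroAtInfty Filter Topology Metric

noncomputable section

lemma c0_abs_le {X : Type*} [TopologicalSpace X] (f : C₀(X, ℝ)) (t : X) : |f t| ≤ ‖f‖ := by
  rw [← ZeroAtInftyContinuousMap.norm_toBCF_eq_norm]
  exact (f.toBCF.norm_coe_le_norm t)

lemma c0_norm_le {X : Type*} [TopologicalSpace X] (f : C₀(X, ℝ)) {M : ℝ} (hM : 0 ≤ M)
    (h : ∀ t, |f t| ≤ M) : ‖f‖ ≤ M := by
  rw [← ZeroAtInftyContinuousMap.norm_toBCF_eq_norm]
  exact BoundedContinuousFunction.norm_le hM |>.mpr h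

lemma c0_bump {X : Type*} [MetricSpace X] [LocallyCompactSpace X] (p : X) {ε : ℝ} (hε : 0 < ε) :
    ∃ f : C₀(X, ℝ), f p = 1 ∧ (∀ s, 0 ≤ f s) ∧ (∀ s, f s ≤ 1) ∧
      (∀ s, ε ≤ dist s p → f s = 0) := by
  obtain ⟨K, hK, hKn⟩ := exists_compact_mem_nhds p
  obtain ⟨r₁, hr₁, hball⟩ := Metric.mem_nhds_iff.mp hKn
  set r := min (r₁ / 2) ε with hr
  have hrpos : 0 < r := lt_min (by linarith) hε
  have hrε : r ≤ ε := min_le_right _ _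
  have hcb : IsCompact (closedBall p r) := by
    refine hK.of_isClosed_subset isClosed_closedBall ?_
    refine subset_trans ?_ hball
    intro s hs
    exact lt_of_le_of_lt (mem_closedBall.mp hs)
      (lt_of_le_of_lt (min_le_left _ _) (by linarith))
  refine ⟨⟨⟨fun s => max 0 (1 - dist s p / r), by fun_prop⟩, ?_⟩, ?_, ?_, ?_, ?_⟩
  · have hev : (fun s => max 0 (1 - dist s p / r)) =ᶠ[cocompact X] 0 := by
      filter_upwards [mem_cocompact.mpr ⟨closedBall p r, hcb, subset_rfl⟩] with s hs
      simp only [Set.mem_compl_iff, mem_closedBall, not_le] at hs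
      have : (1 : ℝ) - dist s p / r ≤ 0 := by
        rw [sub_nonpos]
        exact (one_le_div hrpos).mpr hs.le
      simp [max_eq_left this]
    exact tendsto_const_nhds.congr' hev.symm
  · simp [hrpos.ne']
  · intro s; exact le_max_left _ _
  · intro s
    simp only [ContinuousMap.coe_mk, ZeroAtInftyContinuousMap.coe_mk]
    have : 0 ≤ dist s p / r := by positivity
    refine max_le (by norm_num) (by linarith)
  · intro s hsp
    simp only [ContinuousMap.coe_mk, ZeroAtInftyContinuousMap.coe_mk]
    have : (1 : ℝ) - dist s p / r ≤ 0 := by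
      rw [sub_nonpos]
      exact (one_le_div hrpos).mpr (le_trans hrε hsp)
    simp [max_eq_left this]


/-- Pointwise supremum of two continuous functions vanishing at infinity. -/
def c0sup {X : Type*} [TopologicalSpace X] (f g : C₀(X, ℝ)) : C₀(X, ℝ) where
  toFun := fun t => max (f t) (g t)
  continuous_toFun := (map_continuous f).max (map_continuous g)
  zero_at_infty' := by simpa using (zero_at_infty f).max (zero_at_infty g)

/-- **Corollary 6.2.** Let `(X, d)` be a locally compact metric space and `G` a bounded
group of lattice isomorphisms of `C₀(X)`, with weights `a_g` and homeomorphisms `φ_g`.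
If the family `{a_g : g ∈ G}` is equicontinuous on every compact subset of `X`, then
`m(t) = inf_{g ∈ G} a_g(t)` is continuous; hence so is `m_G = 1/m`, which satisfies
`sup_{g ∈ G} ‖g x‖ = sup_{t ∈ X} m_G(t)·|x(t)|` for every `x ∈ C₀(X)`. -/
theorem stmt16 {X : Type*} [MetricSpace X] [LocallyCompactSpace X]
    (G : Set (C₀(X, ℝ) ≃L[ℝ] C₀(X, ℝ)))
    (h_id : ContinuousLinearEquiv.refl ℝ C₀(X, ℝ) ∈ G)
    (h_comp : ∀ g ∈ G, ∀ h ∈ G, g.trans h ∈ G)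
    (h_inv : ∀ g ∈ G, g.symm ∈ G)
    (h_lat : ∀ g ∈ G, ∀ f₁ f₂ : C₀(X, ℝ), g (c0sup f₁ f₂) = c0sup (g f₁) (g f₂))
    (C : ℝ) (hC : 1 ≤ C)
    (h_bdd : ∀ g ∈ G, ∀ x : C₀(X, ℝ), C⁻¹ * ‖x‖ ≤ ‖g x‖ ∧ ‖g x‖ ≤ C * ‖x‖)
    (a : (C₀(X, ℝ) ≃L[ℝ] C₀(X, ℝ)) → X → ℝ)
    (φ : (C₀(X, ℝ) ≃L[ℝ] C₀(X, ℝ)) → X ≃ₜ X)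
    (hrep : ∀ g ∈ G, ∀ (f : C₀(X, ℝ)) (t : X), g f t = a g t * f (φ g t))
    (ha_cont : ∀ g ∈ G, Continuous (a g))
    (ha_pos : ∀ g ∈ G, ∃ c > 0, ∀ t, c ≤ a g t)
    (ha_bd : ∀ g ∈ G, ∃ C' : ℝ, ∀ t, a g t ≤ C')
    (h_equi : ∀ K : Set X, IsCompact K → ∀ ε > 0, ∃ δ > 0, ∀ s ∈ K, ∀ t ∈ K,
      dist s t < δ → ∀ g ∈ G, |a g s - a g t| < ε) :
    Continuous (fun t : X => ⨅ g : G, a g.1 t) ∧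
    Continuous (fun t : X => (⨅ g : G, a g.1 t)⁻¹) ∧
    ∀ x : C₀(X, ℝ),
      (⨆ g : G, ‖g.1 x‖) = ⨆ t : X, (⨅ g : G, a g.1 t)⁻¹ * |x t| := by
  classical
  haveI : Nonempty G := ⟨⟨_, h_id⟩⟩
  have hCpos : (0 : ℝ) < C := lt_of_lt_of_le one_pos hC
  have hCinv : (0 : ℝ) < C⁻¹ := inv_pos.mpr hCpos
  have hapos : ∀ g ∈ G, ∀ t, 0 < a g t := by
    intro g hg t
    obtain ⟨c, hc, h⟩ := ha_pos g hg
    exact lt_of_lt_of_le hc (h t)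
  -- a g t ≤ C
  have key1 : ∀ g ∈ G, ∀ t, a g t ≤ C := by
    intro g hg t
    obtain ⟨f, hf1, hf0, hfle, _⟩ := c0_bump (φ g t) one_pos
    have h1 : g f t = a g t := by rw [hrep g hg f t, hf1, mul_one]
    have h2 : |g f t| ≤ ‖g f‖ := c0_abs_le _ _
    have h3 : ‖g f‖ ≤ C * ‖f‖ := (h_bdd g hg f).2
    have h4 : ‖f‖ ≤ 1 := c0_norm_le f zero_le_one
      (fun s => abs_le.mpr ⟨by linarith [hf0 s], hfle s⟩)
    calc a g t = g f t := h1.symm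
      _ ≤ |g f t| := le_abs_self _
      _ ≤ C * ‖f‖ := le_trans h2 h3
      _ ≤ C := by nlinarith
  -- the key identity
  have key : ∀ g ∈ G, ∀ t, φ g.symm (φ g t) = t ∧ a g t * a g.symm (φ g t) = 1 := by
    intro g hg t
    have hgs := h_inv g hg
    have hmain : ∀ f : C₀(X, ℝ),
        f t = a g t * a g.symm (φ g t) * f (φ g.symm (φ g t)) := by
      intro f
      have happ : g (g.symm f) = f := g.apply_symm_apply f
      calc f t = g (g.symm f) t := by rw [happ]
        _ = a g t * (g.symm f) (φ g t) := hrep g hg _ t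
        _ = a g t * (a g.symm (φ g t) * f (φ g.symm (φ g t))) := by
            rw [hrep g.symm hgs f (φ g t)]
        _ = _ := by ring
    set p := φ g.symm (φ g t) with hp
    set c := a g t * a g.symm (φ g t) with hc
    have hcpos : 0 < c := mul_pos (hapos g hg t) (hapos g.symm hgs _)
    have hpt : p = t := by
      by_contra hne
      have hd : 0 < dist t p := dist_pos.mpr (fun h => hne h.symm)
      obtain ⟨f, hf1, _, _, hfz⟩ := c0_bump p hd
      have hm := hmain f
      rw [hf1, mul_one] at hm
      have hft : f t = 0 := hfz t le_rfl
      rw [hft] at hm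
      exact absurd hm.symm (ne_of_gt hcpos)
    constructor
    · exact hpt
    · obtain ⟨f, hf1, _, _, _⟩ := c0_bump p one_pos
      have hm := hmain f
      rw [hf1, mul_one, ← hpt, hf1] at hm
      exact hm.symm
  -- a g t ≥ C⁻¹
  have key2 : ∀ g ∈ G, ∀ t, C⁻¹ ≤ a g t := by
    intro g hg t
    have hmul := (key g hg t).2
    have hsC : a g.symm (φ g t) ≤ C := key1 g.symm (h_inv g hg) (φ g t)
    have hspos : 0 < a g.symm (φ g t) := hapos g.symm (h_inv g hg) _
    have hag : 0 < a g t := hapos g hg t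
    have h1 : 1 ≤ a g t * C := by nlinarith
    calc C⁻¹ = C⁻¹ * 1 := by ring
      _ ≤ C⁻¹ * (a g t * C) := by nlinarith
      _ = a g t * (C * C⁻¹) := by ring
      _ = a g t := by rw [mul_inv_cancel₀ hCpos.ne', mul_one]
  set m : X → ℝ := fun t => ⨅ g : G, a g.1 t with hm
  have hbb : ∀ t, BddBelow (Set.range fun g : G => a g.1 t) := by
    intro t
    exact ⟨C⁻¹, by rintro _ ⟨g, rfl⟩; exact key2 g.1 g.2 t⟩
  have hm_ge : ∀ t, C⁻¹ ≤ m t := fun t => le_ciInf fun g => key2 g.1 g.2 t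
  have hm_pos : ∀ t, 0 < m t := fun t => lt_of_lt_of_le hCinv (hm_ge t)
  have hm_le : ∀ g ∈ G, ∀ t, m t ≤ a g t := by
    intro g hg t
    exact ciInf_le (hbb t) ⟨g, hg⟩
  have hmc : Continuous m := by
    rw [Metric.continuous_iff]
    intro t ε hε
    obtain ⟨K, hK, hKn⟩ := exists_compact_mem_nhds t
    obtain ⟨r, hr, hball⟩ := Metric.mem_nhds_iff.mp hKn
    obtain ⟨δ, hδ, hδ'⟩ := h_equi K hK (ε / 2) (by linarith)
    refine ⟨min δ (r / 2), by positivity, fun s hs => ?_⟩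
    have hsr : dist s t < r := lt_of_lt_of_le (lt_of_lt_of_le hs (min_le_right _ _)) (by linarith)
    have hsK : s ∈ K := hball (mem_ball.mpr hsr)
    have htK : t ∈ K := hball (mem_ball.mpr (by simpa using hr))
    have hst : dist s t < δ := lt_of_lt_of_le hs (min_le_left _ _)
    have h1 : ∀ g : G, |a g.1 s - a g.1 t| < ε / 2 := fun g => hδ' s hsK t htK hst g.1 g.2
    have hle1 : m s - ε / 2 ≤ m t := by
      refine le_ciInf fun g => ?_
      have h2 := abs_sub_lt_iff.mp (h1 g)
      have h3 := hm_le g.1 g.2 s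
      linarith [h2.1, h2.2]
    have hle2 : m t - ε / 2 ≤ m s := by
      refine le_ciInf fun g => ?_
      have h2 := abs_sub_lt_iff.mp (h1 g)
      have h3 := hm_le g.1 g.2 t
      linarith [h2.1, h2.2]
    rw [Real.dist_eq]
    rw [abs_sub_lt_iff]
    constructor <;> linarith
  refine ⟨hmc, hmc.inv₀ (fun t => (hm_pos t).ne'), ?_⟩
  intro x
  by_cases hX : IsEmpty X
  · have hx0 : ‖x‖ = 0 := le_antisymm (c0_norm_le x le_rfl (fun t => hX.elim t)) (norm_nonneg _)
    have hgx : ∀ g : G, ‖g.1 x‖ = 0 := by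
      intro g
      have := (h_bdd g.1 g.2 x).2
      rw [hx0, mul_zero] at this
      exact le_antisymm this (norm_nonneg _)
    have h0 : (⨆ g : G, ‖g.1 x‖) = ⨆ _ : G, (0 : ℝ) := by
      congr 1; ext g; exact hgx g
    haveI := hX
    rw [h0, ciSup_const, Real.iSup_of_isEmpty]
  rw [not_isEmpty_iff] at hX
  have hbddS1 : BddAbove (Set.range fun g : G => ‖g.1 x‖) := by
    refine ⟨C * ‖x‖, ?_⟩
    rintro _ ⟨g, rfl⟩
    exact (h_bdd g.1 g.2 x).2
  have hbddS2 : BddAbove (Set.range fun t : X => (m t)⁻¹ * |x t|) := by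
    refine ⟨C * ‖x‖, ?_⟩
    rintro _ ⟨t, rfl⟩
    have h1 : (m t)⁻¹ ≤ C := by
      have := inv_anti₀ hCinv (hm_ge t)
      rwa [inv_inv] at this
    exact mul_le_mul h1 (c0_abs_le x t) (abs_nonneg _) hCpos.le
  set S1 := ⨆ g : G, ‖g.1 x‖ with hS1
  set S2 := ⨆ t : X, (m t)⁻¹ * |x t| with hS2
  have hS2nonneg : 0 ≤ S2 := by
    obtain ⟨t⟩ := hX
    refine le_trans ?_ (le_ciSup hbddS2 t)
    exact mul_nonneg (inv_nonneg.mpr (hm_pos t).le) (abs_nonneg _)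
  have hS1nonneg : 0 ≤ S1 := by
    refine le_trans (norm_nonneg (((⟨_, h_id⟩ : G)).1 x)) (le_ciSup hbddS1 ⟨_, h_id⟩)
  apply le_antisymm
  · refine ciSup_le fun g => ?_
    refine c0_norm_le _ hS2nonneg fun t => ?_
    rw [hrep g.1 g.2 x t]
    have hkey := key g.1 g.2 t
    have hsymm : a g.1 t = (a g.1.symm (φ g.1 t))⁻¹ := eq_inv_of_mul_eq_one_left hkey.2
    have hspos : 0 < a g.1.symm (φ g.1 t) := hapos g.1.symm (h_inv g.1 g.2) _
    have hmle : m (φ g.1 t) ≤ a g.1.symm (φ g.1 t) := hm_le g.1.symm (h_inv g.1 g.2) _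
    calc |a g.1 t * x (φ g.1 t)| = a g.1 t * |x (φ g.1 t)| := by
          rw [abs_mul, abs_of_pos (hapos g.1 g.2 t)]
      _ = (a g.1.symm (φ g.1 t))⁻¹ * |x (φ g.1 t)| := by rw [hsymm]
      _ ≤ (m (φ g.1 t))⁻¹ * |x (φ g.1 t)| := by
          refine mul_le_mul_of_nonneg_right ?_ (abs_nonneg _)
          exact inv_anti₀ (hm_pos _) hmle
      _ ≤ S2 := le_ciSup hbddS2 (φ g.1 t)
  · refine ciSup_le fun t => ?_
    by_cases hxt : x t = 0
    · rw [hxt]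
      simpa using hS1nonneg
    have hxt' : 0 < |x t| := abs_pos.mpr hxt
    have hstep : ∀ g : G, (a g.1 t)⁻¹ * |x t| ≤ S1 := by
      intro g
      have hgs := h_inv g.1 g.2
      have hkey := key g.1 g.2 t
      have hinv : a g.1.symm (φ g.1 t) = (a g.1 t)⁻¹ := eq_inv_of_mul_eq_one_right hkey.2
      have hval : (g.1.symm x) (φ g.1 t) = (a g.1 t)⁻¹ * x t := by
        rw [hrep g.1.symm hgs x (φ g.1 t), hkey.1, hinv]
      calc (a g.1 t)⁻¹ * |x t| = |(g.1.symm x) (φ g.1 t)| := by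
            rw [hval, abs_mul, abs_of_pos (inv_pos.mpr (hapos g.1 g.2 t))]
        _ ≤ ‖g.1.symm x‖ := c0_abs_le _ _
        _ ≤ S1 := le_ciSup hbddS1 ⟨g.1.symm, hgs⟩
    have hS1pos : 0 < S1 := by
      refine lt_of_lt_of_le ?_ (hstep ⟨_, h_id⟩)
      exact mul_pos (inv_pos.mpr (hapos _ h_id t)) hxt'
    have hmt : |x t| / S1 ≤ m t := by
      refine le_ciInf fun g => ?_
      have h1 := hstep g
      have hag : 0 < a g.1 t := hapos g.1 g.2 t
      rw [div_le_iff₀ hS1pos]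
      calc |x t| = a g.1 t * ((a g.1 t)⁻¹ * |x t|) := by field_simp
        _ ≤ a g.1 t * S1 := mul_le_mul_of_nonneg_left h1 hag.le
    have h2 : |x t| ≤ m t * S1 := (div_le_iff₀ hS1pos).mp hmt
    calc (m t)⁻¹ * |x t| ≤ (m t)⁻¹ * (m t * S1) :=
          mul_le_mul_of_nonneg_left h2 (inv_nonneg.mpr (hm_pos t).le)
      _ = S1 := by rw [← mul_assoc, inv_mul_cancel₀ (hm_pos t).ne', one_mul]


end
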